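/- Let k, s, m, n be positive integers with gcd(s,n) = 1 and 1 ≤ k ≤ m ≤ n, and let U be an m-dimensional K-subspace of F with basis {α_1, ..., α_m}. Then the projected Gabidulin code π_U(G_{k,s}) ⊆ K^{m×n} has exactly q^{nk} elements and minimum rank distance m − k + 1; in particular, it is an MRD code. -/

import Mathlib

open Module Submodule LinearMap Finset Polynomial

section GabAux

variable (K : Type*) {F : Type*} [Field K] [Fintype K] [Field F] [Algebra K F]

lemma gab_add_pow (t : ℕ) (x y : F) :
    (x + y) ^ Fintype.card K ^ t = x ^ Fintype.card K ^ t + y ^ Fintype.card K ^ t := by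
  obtain ⟨r, hp, hcard⟩ := FiniteField.card K (ringChar K)
  haveI : Fact (ringChar K).Prime := ⟨hp⟩
  haveI : CharP F (ringChar K) := charP_of_injective_algebraMap (algebraMap K F).injective _
  rw [hcard, ← pow_mul]
  exact add_pow_char_pow x y (ringChar K) ((r : ℕ) * t)

lemma gab_sub_pow (t : ℕ) (x y : F) :
    (x - y) ^ Fintype.card K ^ t = x ^ Fintype.card K ^ t - y ^ Fintype.card K ^ t := by
  obtain ⟨r, hp, hcard⟩ := FiniteField.card K (ringChar K)
  haveI : Fact (ringChar K).Prime := ⟨hp⟩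
  haveI : CharP F (ringChar K) := charP_of_injective_algebraMap (algebraMap K F).injective _
  rw [hcard, ← pow_mul]
  exact sub_pow_char_pow x y ((r : ℕ) * t)

lemma gab_smul_pow (t : ℕ) (c : K) (x : F) :
    (c • x) ^ Fintype.card K ^ t = c • x ^ Fintype.card K ^ t := by
  rw [Algebra.smul_def, Algebra.smul_def, mul_pow, ← map_pow, FiniteField.pow_card_pow]

/-- `x ↦ x ^ q ^ t` as a `K`-linear map. -/
def monLin (t : ℕ) : F →ₗ[K] F where
  toFun x := x ^ Fintype.card K ^ t
  map_add' := gab_add_pow K t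
  map_smul' c x := gab_smul_pow K t c x

@[simp] lemma monLin_apply (t : ℕ) (x : F) : monLin K t x = x ^ Fintype.card K ^ t := rfl

/-- injectivity of `x ↦ x ^ q ^ t` -/
lemma monLin_injective (t : ℕ) : Function.Injective (fun x : F => x ^ Fintype.card K ^ t) := by
  intro x y hxy
  simp only at hxy
  have h2 := gab_sub_pow K t x y
  rw [hxy, sub_self] at h2
  have h0 : Fintype.card K ^ t ≠ 0 := pow_ne_zero _ Fintype.card_ne_zero
  exact sub_eq_zero.mp ((pow_eq_zero_iff h0).mp h2)

end GabAux
section Gab2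

variable (K : Type*) {F : Type*} [Field K] [Fintype K] [Field F] [Algebra K F]

lemma gab_pow_mul_fix (x : F) {a : ℕ} (ha : x ^ Fintype.card K ^ a = x) (l : ℕ) :
    x ^ Fintype.card K ^ (a * l) = x := by
  induction l with
  | zero => simp
  | succ l ih =>
      have : Fintype.card K ^ (a * (l + 1)) = Fintype.card K ^ (a * l) * Fintype.card K ^ a := by
        rw [← pow_add]; ring_nf
      rw [this, pow_mul, ih, ha]

lemma gab_pow_gcd (x : F) : ∀ a b : ℕ, x ^ Fintype.card K ^ a = x → x ^ Fintype.card K ^ b = x →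
    x ^ Fintype.card K ^ Nat.gcd a b = x := by
  intro a b
  induction a, b using Nat.gcd.induction with
  | H0 b => intro _ hb; simpa using hb
  | H1 a b ha ih =>
      intro hxa hxb
      rw [Nat.gcd_rec]
      refine ih ?_ hxa
      -- show x ^ q ^ (b % a) = x
      have hdiv : a * (b / a) + b % a = b := Nat.div_add_mod b a
      have h1 : (x ^ Fintype.card K ^ (b % a)) ^ Fintype.card K ^ (a * (b / a)) = x := by
        rw [← pow_mul, ← pow_add, Nat.add_comm, hdiv, hxb]
      have h2 : x ^ Fintype.card K ^ (a * (b / a)) = x := gab_pow_mul_fix K x hxa _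
      exact monLin_injective K (a * (b / a)) (h1.trans h2.symm)

lemma gab_fixed_field {n : ℕ} (hn : Module.finrank K F = n) (h0 : 0 < n) {s : ℕ}
    (hgcd : Nat.gcd s n = 1) (x : F) (hx : x ^ Fintype.card K ^ s = x) :
    ∃ c : K, algebraMap K F c = x := by
  classical
  haveI : FiniteDimensional K F := Module.finite_of_finrank_pos (hn ▸ h0)
  haveI : Finite F := Module.finite_of_finite K
  haveI : Fintype F := Fintype.ofFinite F
  have hcardF : Fintype.card F = Fintype.card K ^ n := by
    rw [card_eq_pow_finrank (K := K) (V := F), hn]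
  have hxn : x ^ Fintype.card K ^ n = x := by
    rw [← hcardF]; exact FiniteField.pow_card x
  have hxq : x ^ Fintype.card K = x := by
    have := gab_pow_gcd K x s n hx hxn
    rwa [hgcd, pow_one] at this
  -- root counting
  let A : Finset F := Finset.univ.image (algebraMap K F)
  let T : Finset F := Finset.univ.filter fun z : F => z ^ Fintype.card K = z
  have hq2 : 1 < Fintype.card K := Fintype.one_lt_card
  have hAT : A ⊆ T := by
    intro z hz
    simp only [A, Finset.mem_image] at hz
    obtain ⟨c, _, rfl⟩ := hz
    simp only [T, Finset.mem_filter, Finset.mem_univ, true_and]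
    rw [← map_pow, FiniteField.pow_card]
  have hcardA : A.card = Fintype.card K := by
    rw [Finset.card_image_of_injective _ (algebraMap K F).injective, Finset.card_univ]
  have hTle : T.card ≤ Fintype.card K := by
    have hP : (Polynomial.X ^ Fintype.card K - Polynomial.X : Polynomial F).natDegree
        = Fintype.card K := by
      have h1 : (Polynomial.X : Polynomial F).natDegree
          < (Polynomial.X ^ Fintype.card K : Polynomial F).natDegree := by
        simpa using hq2
      rw [Polynomial.natDegree_sub_eq_left_of_natDegree_lt h1, Polynomial.natDegree_X_pow]
    have hPne : (Polynomial.X ^ Fintype.card K - Polynomial.X : Polynomial F) ≠ 0 := fun h => by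
      rw [h] at hP; simp at hP; omega
    have hsub : T ⊆ (Polynomial.X ^ Fintype.card K - Polynomial.X : Polynomial F).roots.toFinset := by
      intro z hz
      simp only [T, Finset.mem_filter] at hz
      rw [Multiset.mem_toFinset, Polynomial.mem_roots hPne]
      simp [Polynomial.IsRoot, sub_eq_zero, hz.2]
    calc T.card ≤ _ := Finset.card_le_card hsub
      _ ≤ _ := Multiset.toFinset_card_le _
      _ ≤ _ := Polynomial.card_roots' _
      _ = Fintype.card K := hP
  have hAeqT : A = T := Finset.eq_of_subset_of_card_le hAT (hTle.trans hcardA.ge)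
  have hxT : x ∈ T := by simp [T, hxq]
  rw [← hAeqT] at hxT
  simp only [A, Finset.mem_image] at hxT
  obtain ⟨c, _, hc⟩ := hxT
  exact ⟨c, hc⟩

end Gab2
section Gab3

variable (K : Type*) {F : Type*} [Field K] [Fintype K] [Field F] [Algebra K F]

/-- the `K`-linear map `x ↦ ∑_{i<k} b i * x^(q^(s*i))` -/
noncomputable def gabL (s : ℕ) (b : ℕ → F) (k : ℕ) : F →ₗ[K] F :=
  ∑ i ∈ Finset.range k, b i • monLin K (s * i)

lemma gabL_apply (s : ℕ) (b : ℕ → F) (k : ℕ) (x : F) :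
    gabL K s b k x = ∑ i ∈ Finset.range k, b i * x ^ Fintype.card K ^ (s * i) := by
  simp [gabL, LinearMap.sum_apply, smul_eq_mul]

lemma gab_comap_bound [FiniteDimensional K F] (D : F →ₗ[K] F) (W : Submodule K F) :
    Module.finrank K (W.comap D) ≤ Module.finrank K W + Module.finrank K (LinearMap.ker D) := by
  have h := (D.domRestrict (W.comap D)).finrank_range_add_finrank_ker
  rw [LinearMap.range_domRestrict] at h
  have hker : LinearMap.ker (D.domRestrict (W.comap D))
      = (LinearMap.ker D).comap (W.comap D).subtype := by
    ext x
    simp [LinearMap.mem_ker]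
  have hle : LinearMap.ker D ≤ W.comap D := by
    intro x hx
    simp only [LinearMap.mem_ker] at hx
    simp [Submodule.mem_comap, hx]
  rw [hker, (Submodule.comapSubtypeEquivOfLe hle).finrank_eq] at h
  have hmap : Module.finrank K ((W.comap D).map D) ≤ Module.finrank K W :=
    Submodule.finrank_mono (Submodule.map_comap_le D W)
  omega

lemma gab_rank_nullity [FiniteDimensional K F] (L : F →ₗ[K] F) (U : Submodule K F) :
    Module.finrank K (U.map L) + Module.finrank K ↥(LinearMap.ker L ⊓ U) = Module.finrank K U := by
  have h := (L.domRestrict U).finrank_range_add_finrank_ker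
  rw [LinearMap.range_domRestrict] at h
  have hker : LinearMap.ker (L.domRestrict U)
      = (LinearMap.ker L ⊓ U).comap U.subtype := by
    ext x
    simp [LinearMap.mem_ker, x.2]
  rw [hker, (Submodule.comapSubtypeEquivOfLe (inf_le_right : LinearMap.ker L ⊓ U ≤ U)).finrank_eq] at h
  exact h

lemma gab_sum_parts {R : Type*} [CommRing R] (k : ℕ) (β x : ℕ → R)
    (h : ∑ i ∈ Finset.range (k + 2), β i = 0) :
    ∑ i ∈ Finset.range (k + 2), β i * x i
      = ∑ j ∈ Finset.range (k + 1),
          (∑ i ∈ Finset.Ico (j + 1) (k + 2), β i) * (x (j + 1) - x j) := by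
  set S : ℕ → R := fun j => ∑ i ∈ Finset.Ico j (k + 2), β i with hS
  have hS0 : S 0 = 0 := by
    rw [hS]; simpa [← Finset.range_eq_Ico] using h
  have hStop : S (k + 2) = 0 := by simp [hS]
  have hstep : ∀ t, t < k + 2 → S t = β t + S (t + 1) := by
    intro t ht
    rw [hS]
    exact Finset.sum_eq_sum_Ico_succ_bot ht β
  calc ∑ i ∈ Finset.range (k + 2), β i * x i
      = ∑ t ∈ Finset.range (k + 2), (S t - S (t + 1)) * x t := by
        refine Finset.sum_congr rfl fun t ht => ?_
        rw [hstep t (Finset.mem_range.mp ht)]; ring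
    _ = ∑ t ∈ Finset.range (k + 2), S t * x t
        - ∑ t ∈ Finset.range (k + 2), S (t + 1) * x t := by
        rw [← Finset.sum_sub_distrib]
        refine Finset.sum_congr rfl fun t _ => by ring
    _ = ∑ j ∈ Finset.range (k + 1), S (j + 1) * x (j + 1)
        - ∑ j ∈ Finset.range (k + 1), S (j + 1) * x j := by
        congr 1
        · rw [Finset.sum_range_succ' (fun t => S t * x t) (k + 1), hS0]
          simp
        · rw [Finset.sum_range_succ (fun t => S (t + 1) * x t) (k + 1), hStop]
          simp
    _ = ∑ j ∈ Finset.range (k + 1),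
          (∑ i ∈ Finset.Ico (j + 1) (k + 2), β i) * (x (j + 1) - x j) := by
        rw [← Finset.sum_sub_distrib]
        exact Finset.sum_congr rfl fun j _ => by rw [hS]; ring

end Gab3
section Gab4

variable (K : Type*) {F : Type*} [Field K] [Fintype K] [Field F] [Algebra K F]

lemma gab_ker_D_bound [FiniteDimensional K F] {n : ℕ} (hn : Module.finrank K F = n)
    (h0 : 0 < n) {s : ℕ} (hgcd : Nat.gcd s n = 1) :
    Module.finrank K (LinearMap.ker (monLin K (F := F) s - LinearMap.id)) ≤ 1 := by
  have hle : LinearMap.ker (monLin K (F := F) s - LinearMap.id)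
      ≤ LinearMap.range (Algebra.linearMap K F) := by
    intro x hx
    simp only [LinearMap.mem_ker, LinearMap.sub_apply, LinearMap.id_apply, monLin_apply,
      sub_eq_zero] at hx
    obtain ⟨c, hc⟩ := gab_fixed_field K hn h0 hgcd x hx
    exact ⟨c, hc⟩
  calc Module.finrank K (LinearMap.ker (monLin K (F := F) s - LinearMap.id))
      ≤ Module.finrank K (LinearMap.range (Algebra.linearMap K F)) :=
        Submodule.finrank_mono hle
    _ ≤ Module.finrank K K := LinearMap.finrank_range_le _
    _ = 1 := Module.finrank_self K

lemma gab_ker_bound {n : ℕ} (hn : Module.finrank K F = n) (h0 : 0 < n) {s : ℕ}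
    (hgcd : Nat.gcd s n = 1) :
    ∀ (k : ℕ) (b : ℕ → F), (∃ i, i < k + 1 ∧ b i ≠ 0) →
      Module.finrank K (LinearMap.ker (gabL K s b (k + 1))) ≤ k := by
  haveI : FiniteDimensional K F := Module.finite_of_finrank_pos (hn ▸ h0)
  intro k
  induction k with
  | zero =>
      intro b hb
      obtain ⟨i, hi, hbi⟩ := hb
      interval_cases i
      have : LinearMap.ker (gabL K s b 1) = ⊥ := by
        rw [LinearMap.ker_eq_bot']
        intro x hx
        rw [gabL_apply] at hx
        simp only [Finset.range_one, Finset.sum_singleton, Nat.mul_zero, pow_zero, pow_one] at hx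
        exact (mul_eq_zero.mp hx).resolve_left hbi
      rw [this]
      simp
  | succ k ih =>
      intro b hb
      set L := gabL K s b (k + 2) with hL
      rcases eq_or_ne (LinearMap.ker L) ⊥ with hbot | hne
      · rw [hbot]; simp
      obtain ⟨u, huL, hu0⟩ := (Submodule.ne_bot_iff _).mp hne
      set β : ℕ → F := fun i => b i * u ^ Fintype.card K ^ (s * i) with hβ
      have hβsum : ∑ i ∈ Finset.range (k + 2), β i = 0 := by
        have := huL
        rw [LinearMap.mem_ker, hL, gabL_apply] at this
        exact this
      set c : ℕ → F := fun j => ∑ i ∈ Finset.Ico (j + 1) (k + 2), β i with hc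
      set N := gabL K s c (k + 1) with hN
      set D : F →ₗ[K] F := monLin K s - LinearMap.id with hD
      -- claim 1
      have claim1 : ∀ x : F, L (u * x) = N (D x) := by
        intro x
        rw [hL, gabL_apply]
        have lhs : ∀ i : ℕ, b i * (u * x) ^ Fintype.card K ^ (s * i)
            = β i * x ^ Fintype.card K ^ (s * i) := by
          intro i; rw [mul_pow, hβ]; ring
        rw [Finset.sum_congr rfl fun i _ => lhs i]
        rw [gab_sum_parts k β _ hβsum]
        rw [hN, gabL_apply]
        refine Finset.sum_congr rfl fun j _ => ?_
        have hDx : D x = x ^ Fintype.card K ^ s - x := by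
          simp [hD]
        have hterm : (x ^ Fintype.card K ^ s - x) ^ Fintype.card K ^ (s * j)
            = x ^ Fintype.card K ^ (s * (j + 1)) - x ^ Fintype.card K ^ (s * j) := by
          rw [gab_sub_pow, ← pow_mul, ← pow_add, show s + s * j = s * (j + 1) by ring]
        rw [hDx, hterm]
      -- claim 2
      have claim2 : ∃ j, j < k + 1 ∧ c j ≠ 0 := by
        by_contra hcon
        push_neg at hcon
        have hc' : ∀ j, c j = 0 := by
          intro j
          rcases lt_or_ge j (k + 1) with hj | hj
          · exact hcon j hj
          · rw [hc]
            simp only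
            rw [Finset.Ico_eq_empty (by omega), Finset.sum_empty]
        have hS : ∀ j, (∑ i ∈ Finset.Ico j (k + 2), β i) = 0 := by
          intro j
          match j with
          | 0 => simpa [← Finset.range_eq_Ico] using hβsum
          | j + 1 => exact hc' j
        have hβ0 : ∀ i, i < k + 2 → β i = 0 := by
          intro i hi
          have h1 := Finset.sum_eq_sum_Ico_succ_bot hi β
          rw [hS i, hS (i + 1)] at h1
          simpa using h1.symm
        obtain ⟨i, hi, hbi⟩ := hb
        have := hβ0 i hi
        rw [hβ] at this
        simp only at this
        rcases mul_eq_zero.mp this with h | h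
        · exact hbi h
        · exact pow_ne_zero _ hu0 h
      -- use induction hypothesis
      have hNrank : Module.finrank K (LinearMap.ker N) ≤ k := ih c claim2
      -- multiplication by u as an equivalence
      have hmul : ∀ x : F, u⁻¹ * (u * x) = x := fun x => by
        field_simp
      let e : F ≃ₗ[K] F := LinearEquiv.ofLinear
        (LinearMap.mulLeft K u) (LinearMap.mulLeft K u⁻¹)
        (by ext x; simp [LinearMap.mulLeft_apply]; field_simp)
        (by ext x; simp [LinearMap.mulLeft_apply]; field_simp)
      have hcomp : L ∘ₗ (e : F →ₗ[K] F) = N ∘ₗ D := by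
        ext x
        simpa [e, LinearMap.mulLeft_apply] using claim1 x
      have hkerL : Module.finrank K (LinearMap.ker L)
          = Module.finrank K (LinearMap.ker (L ∘ₗ (e : F →ₗ[K] F))) := by
        rw [LinearMap.ker_comp, Submodule.comap_equiv_eq_map_symm,
          LinearEquiv.finrank_map_eq]
      rw [hkerL, hcomp, LinearMap.ker_comp]
      calc Module.finrank K ((LinearMap.ker N).comap D)
          ≤ Module.finrank K (LinearMap.ker N) + Module.finrank K (LinearMap.ker D) :=
            gab_comap_bound K D _
        _ ≤ k + 1 := by
            have hD1 : Module.finrank K (LinearMap.ker D) ≤ 1 := by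
              rw [hD]; exact gab_ker_D_bound K hn h0 hgcd
            omega

end Gab4
/-- The set `G_{k,s}` of linearized polynomials
`a₀ X + a₁ X^{q^s} + ⋯ + a_{k-1} X^{q^{s(k-1)}}` with `a₀, …, a_{k-1} ∈ F`. -/
def Gks (q k s : ℕ) (F : Type*) [Field F] : Set (Polynomial F) :=
  {p | ∃ a : Fin k → F, p = ∑ i : Fin k, Polynomial.C (a i) * Polynomial.X ^ q ^ (s * (i : ℕ))}

/-- The projected Gabidulin code `π_U(G_{k,s})` in `K^{m×n}` obtained from a basis
`α : Fin m → F` of the `m`-dimensional `K`-subspace `U` of `F` and a coordinate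
isomorphism `v : F ≃ K^n`. -/
def gabCode {K F : Type*} [Field K] [Field F] [Algebra K F] (q k s m n : ℕ)
    (α : Fin m → F) (v : F ≃ₗ[K] (Fin n → K)) : Set (Matrix (Fin m) (Fin n) K) :=
  {M | ∃ p ∈ Gks q k s F, M = Matrix.of fun i j => v (p.eval (α i)) j}

/-- The projected Gabidulin code `π_U(G_{k,s})` has exactly `q^{nk}` elements and
minimum rank distance `m - k + 1`; in particular (since
`q^{nk} = q^{n(m - (m-k+1) + 1)}`) it is an MRD code. -/
theorem gabidulin_code_is_MRD
    (K F : Type*) [Field K] [Fintype K] [Field F] [Algebra K F]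
    (q k s m n : ℕ) (hq : q = Fintype.card K) (hn : Module.finrank K F = n)
    (hs : 0 < s) (hgcd : Nat.gcd s n = 1) (hk : 0 < k) (hkm : k ≤ m) (hmn : m ≤ n)
    (U : Submodule K F) (hU : Module.finrank K U = m)
    (α : Fin m → F) (hα : LinearIndependent K α)
    (hαspan : Submodule.span K (Set.range α) = U)
    (v : F ≃ₗ[K] (Fin n → K)) :
    Nat.card (gabCode q k s m n α v) = q ^ (n * k) ∧
    (∀ A ∈ gabCode q k s m n α v, ∀ B ∈ gabCode q k s m n α v,
      A ≠ B → m - k + 1 ≤ (A - B).rank) ∧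
    (∃ A ∈ gabCode q k s m n α v, ∃ B ∈ gabCode q k s m n α v,
      A ≠ B ∧ (A - B).rank = m - k + 1) := by
  classical
  subst hq
  have hn0 : 0 < n := by omega
  haveI : FiniteDimensional K F := Module.finite_of_finrank_pos (hn ▸ hn0)
  obtain ⟨k', rfl⟩ : ∃ k', k = k' + 1 := ⟨k - 1, by omega⟩
  set eb : (Fin (k' + 1) → F) → ℕ → F :=
    (fun a i => if h : i < k' + 1 then a ⟨i, h⟩ else 0) with heb
  set Φ : (Fin (k' + 1) → F) → Matrix (Fin m) (Fin n) K :=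
    (fun a => Matrix.of fun i j => v (gabL K s (eb a) (k' + 1) (α i)) j) with hΦ
  have hgabL_fin : ∀ (a : Fin (k' + 1) → F) (x : F),
      gabL K s (eb a) (k' + 1) x
        = ∑ i : Fin (k' + 1), a i * x ^ Fintype.card K ^ (s * (i : ℕ)) := by
    intro a x
    rw [gabL_apply,
      ← Fin.sum_univ_eq_sum_range (fun i => eb a i * x ^ Fintype.card K ^ (s * i)) (k' + 1)]
    exact Finset.sum_congr rfl fun i _ => by simp [heb, i.isLt, Nat.le_of_lt_succ i.isLt]
  have heval : ∀ (a : Fin (k' + 1) → F) (x : F),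
      Polynomial.eval x
          (∑ i : Fin (k' + 1), Polynomial.C (a i)
            * Polynomial.X ^ Fintype.card K ^ (s * (i : ℕ)))
        = gabL K s (eb a) (k' + 1) x := by
    intro a x
    rw [Polynomial.eval_finset_sum, hgabL_fin]
    exact Finset.sum_congr rfl fun i _ => by simp
  have hcode : gabCode (Fintype.card K) (k' + 1) s m n α v = Set.range Φ := by
    ext M
    constructor
    · rintro ⟨p, ⟨a, rfl⟩, rfl⟩
      refine ⟨a, ?_⟩
      ext i j
      simp only [hΦ, Matrix.of_apply]
      rw [heval a (α i)]
    · rintro ⟨a, rfl⟩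
      refine ⟨∑ i : Fin (k' + 1), Polynomial.C (a i)
          * Polynomial.X ^ Fintype.card K ^ (s * (i : ℕ)), ⟨a, rfl⟩, ?_⟩
      ext i j
      simp only [hΦ, Matrix.of_apply]
      rw [heval a (α i)]
  have hebsub : ∀ a a' : Fin (k' + 1) → F, eb (a - a') = eb a - eb a' := by
    intro a a'
    funext i
    by_cases h : i < k' + 1 <;> simp only [heb, h, Pi.sub_apply, ↓reduceDIte, sub_zero]
  have hgabLsub : ∀ a a' : Fin (k' + 1) → F,
      gabL K s (eb (a - a')) (k' + 1)
        = gabL K s (eb a) (k' + 1) - gabL K s (eb a') (k' + 1) := by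
    intro a a'
    rw [hebsub]
    unfold gabL
    rw [← Finset.sum_sub_distrib]
    exact Finset.sum_congr rfl fun i _ => by rw [Pi.sub_apply]; ext x; simp [sub_mul]
  have hΦsub : ∀ a a' : Fin (k' + 1) → F, Φ a - Φ a' = Φ (a - a') := by
    intro a a'
    ext i j
    simp only [hΦ, Matrix.sub_apply, Matrix.of_apply, hgabLsub, LinearMap.sub_apply, map_sub,
      Pi.sub_apply]
  have hrank : ∀ a : Fin (k' + 1) → F,
      (Φ a).rank = Module.finrank K (U.map (gabL K s (eb a) (k' + 1))) := by
    intro a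
    set L := gabL K s (eb a) (k' + 1) with hLdef
    rw [Matrix.rank_eq_finrank_span_row]
    have h1 : Set.range (Φ a).row = ⇑(v.toLinearMap ∘ₗ L) '' Set.range α := by
      rw [← Set.range_comp]
      rfl
    rw [h1, Submodule.span_image, hαspan, Submodule.map_comp]
    exact LinearEquiv.finrank_map_eq v (U.map L)
  have hker : ∀ a : Fin (k' + 1) → F, a ≠ 0 →
      Module.finrank K (LinearMap.ker (gabL K s (eb a) (k' + 1))) ≤ k' := by
    intro a ha
    refine gab_ker_bound K hn hn0 hgcd k' (eb a) ?_
    obtain ⟨i, hi⟩ := Function.ne_iff.mp ha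
    exact ⟨(i : ℕ), i.isLt, by simpa [heb, i.isLt, Nat.le_of_lt_succ i.isLt] using hi⟩
  have hinj : Function.Injective Φ := by
    intro a a' h
    by_contra hne
    have hd : a - a' ≠ 0 := sub_ne_zero.mpr hne
    have hΦ0 : Φ (a - a') = 0 := by rw [← hΦsub, h, sub_self]
    set L := gabL K s (eb (a - a')) (k' + 1) with hLd
    have hαker : ∀ i : Fin m, L (α i) = 0 := by
      intro i
      have hv : v (L (α i)) = 0 := by
        funext j
        have := congrFun (congrFun hΦ0 i) j
        simpa [hΦ] using this
      exact v.map_eq_zero_iff.mp hv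
    have hUle : U ≤ LinearMap.ker L := by
      rw [← hαspan, Submodule.span_le]
      rintro x ⟨i, rfl⟩
      exact LinearMap.mem_ker.mpr (hαker i)
    have h1 := Submodule.finrank_mono hUle
    rw [hU] at h1
    have h2 := hker (a - a') hd
    rw [← hLd] at h2
    omega
  haveI : Finite F := Module.finite_of_finite K
  haveI : Fintype F := Fintype.ofFinite F
  have hcount : Nat.card (gabCode (Fintype.card K) (k' + 1) s m n α v)
      = Fintype.card K ^ (n * (k' + 1)) := by
    rw [hcode, Nat.card_congr (Equiv.ofInjective Φ hinj).symm, Nat.card_fun]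
    rw [Nat.card_eq_fintype_card (α := F), card_eq_pow_finrank (K := K) (V := F), hn,
      Nat.card_eq_fintype_card (α := Fin (k' + 1)), Fintype.card_fin, ← pow_mul]
  refine ⟨hcount, ?_, ?_⟩
  · rintro A hA B hB hAB
    rw [hcode] at hA hB
    obtain ⟨a, rfl⟩ := hA
    obtain ⟨a', rfl⟩ := hB
    have hne : a ≠ a' := fun h => hAB (by rw [h])
    have hd : a - a' ≠ 0 := sub_ne_zero.mpr hne
    rw [hΦsub]
    set L := gabL K s (eb (a - a')) (k' + 1) with hL
    have h1 := hrank (a - a')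
    rw [← hL] at h1
    have h2 := gab_rank_nullity K L U
    rw [hU] at h2
    have h3 : Module.finrank K ↥(LinearMap.ker L ⊓ U) ≤ k' :=
      le_trans (Submodule.finrank_mono inf_le_left) (hker _ hd)
    omega
  · let emb : Fin k' → Fin m := fun j => ⟨(j : ℕ), by omega⟩
    let eL : (Fin (k' + 1) → F) →ₗ[F] (Fin k' → F) :=
      { toFun := fun a => fun j =>
          ∑ i : Fin (k' + 1), a i * (α (emb j)) ^ Fintype.card K ^ (s * (i : ℕ))
        map_add' := by
          intro a a'
          funext j
          simp [add_mul, Finset.sum_add_distrib]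
        map_smul' := by
          intro csc a
          funext j
          simp [Finset.mul_sum, mul_assoc, smul_eq_mul] }
    have hkerne : LinearMap.ker eL ≠ ⊥ := by
      intro hbot
      have hinj' : Function.Injective eL := LinearMap.ker_eq_bot.mp hbot
      have hle := LinearMap.finrank_le_finrank_of_injective hinj'
      rw [Module.finrank_fin_fun, Module.finrank_fin_fun] at hle
      omega
    obtain ⟨a, haker, ha0⟩ := (Submodule.ne_bot_iff _).mp hkerne
    set L := gabL K s (eb a) (k' + 1) with hL
    have hαker : ∀ j : Fin k', L (α (emb j)) = 0 := by
      intro j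
      have h0 := congrFun (LinearMap.mem_ker.mp haker) j
      rw [hL, hgabL_fin]
      simpa [eL] using h0
    have hspan : Submodule.span K (Set.range (α ∘ emb)) ≤ LinearMap.ker L ⊓ U := by
      rw [Submodule.span_le]
      rintro x ⟨j, rfl⟩
      refine ⟨LinearMap.mem_ker.mpr (hαker j), ?_⟩
      rw [← hαspan]
      exact Submodule.subset_span ⟨emb j, rfl⟩
    have hembinj : Function.Injective emb := by
      intro x y hxy
      simpa [emb, Fin.ext_iff] using hxy
    have hliγ : LinearIndependent K (α ∘ emb) := hα.comp emb hembinj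
    have hfinspan : Module.finrank K (Submodule.span K (Set.range (α ∘ emb))) = k' := by
      rw [finrank_span_eq_card hliγ, Fintype.card_fin]
    have hge : k' ≤ Module.finrank K ↥(LinearMap.ker L ⊓ U) := by
      rw [← hfinspan]
      exact Submodule.finrank_mono hspan
    have hle : Module.finrank K ↥(LinearMap.ker L ⊓ U) ≤ k' :=
      le_trans (Submodule.finrank_mono inf_le_left) (hker a ha0)
    have h1 := hrank a
    rw [← hL] at h1
    have h2 := gab_rank_nullity K L U
    rw [hU] at h2
    rw [hcode]
    refine ⟨Φ a, ⟨a, rfl⟩, Φ 0, ⟨0, rfl⟩, fun h => ha0 (hinj h), ?_⟩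
    rw [hΦsub, sub_zero]
    omega
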